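/- Let P = S·n·e·T be a Schröder path containing a consecutive north step followed by an east step at a given position, and let SdT and SenT be the paths obtained by replacing those two steps by a single diagonal step, respectively by an east step followed by a north step (assuming SenT is still a valid Schröder path). Then LLT(SneT) = (q-1)·LLT(SdT) + LLT(SenT), where LLT of a Schröder path denotes the LLT polynomial of its associated LLT graph. -/

import Mathlib

open scoped Classical

noncomputable section

/-- A lattice-path step: north `(0,1)`, east `(1,0)`, or diagonal `(1,1)`. -/
inductive Step : Type
  | n : Step
  | e : Step
  | d : Step
deriving DecidableEq

/-- The endpoint of the lattice path given by a list of steps, starting at `(0,0)`. -/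
def pathPos (P : List Step) : ℕ × ℕ :=
  (P.count Step.e + P.count Step.d, P.count Step.n + P.count Step.d)

/-- `P` is a Schröder path of length `m`: it runs from `(0,0)` to `(m,m)`, never
falls below the main diagonal, and has no diagonal step starting on the diagonal. -/
def IsSchroder (m : ℕ) (P : List Step) : Prop :=
  pathPos P = (m, m) ∧
  (∀ k : ℕ, (pathPos (P.take k)).1 ≤ (pathPos (P.take k)).2) ∧
  (∀ k : ℕ, P[k]? = some Step.d → (pathPos (P.take k)).1 < (pathPos (P.take k)).2)

/-- `P` has a diagonal step in the box `(i,j)` (the unit box with top-right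
vertex `(i,j)`), i.e. some prefix of `P` ends at `(i-1, j-1)` and is followed by a
diagonal step. -/
def HasDiag (P : List Step) (i j : ℕ) : Prop :=
  ∃ k : ℕ, P[k]? = some Step.d ∧ pathPos (P.take k) = (i - 1, j - 1)

/-- The box `(i,j)` lies (strictly) under the path `P`: some prefix of `P` ends at a
point with abscissa `i-1` and ordinate at least `j`. -/
def UnderPath (P : List Step) (i j : ℕ) : Prop :=
  ∃ k : ℕ, (pathPos (P.take k)).1 = i - 1 ∧ j ≤ (pathPos (P.take k)).2

/-- The weight of a coloring `f` of the vertices `1, ..., m` (the diagonal boxes)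
for the LLT graph `G(P)` of a Schröder path `P`: each diagonal-step box `(i,j)`
gives a type I edge (factor `[f i > f j]`), and each box `(i,j)` with `i < j`
strictly under `P` gives a double edge (factor `q[f i > f j] + [f i ≤ f j]`,
with `q = Polynomial.X`). -/
noncomputable def schroderWeight (m : ℕ) (P : List Step) (f : ℕ → ℕ+) : Polynomial ℤ :=
  ∏ p ∈ Finset.Icc 1 m ×ˢ Finset.Icc 1 m,
    ((if HasDiag P p.1 p.2 then (if f p.2 < f p.1 then 1 else 0) else 1) *
      (if p.1 < p.2 ∧ UnderPath P p.1 p.2 then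
        (if f p.2 < f p.1 then Polynomial.X else 1) else 1))

/-- The LLT polynomial `LLT(G(P))` of a Schröder path `P` of length `m`, as a formal
power series in the variables `x_1, x_2, ...` indexed by `ℕ+`: the coefficient of a
monomial `dd` is the sum of `schroderWeight` over the colorings `f` of `{1, ..., m}`
(extended by `1` elsewhere) whose monomial `∏_{v=1}^m x_{f v}` equals `dd`. -/
noncomputable def LLTpath (m : ℕ) (P : List Step) : MvPowerSeries ℕ+ (Polynomial ℤ) :=
  fun dd => ∑ᶠ f : ℕ → ℕ+,
    if (∀ v : ℕ, v ∉ Finset.Icc 1 m → f v = 1) ∧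
        (∑ v ∈ Finset.Icc 1 m, Finsupp.single (f v) 1) = dd
    then schroderWeight m P f else 0

lemma pathPos_append (A B : List Step) : pathPos (A ++ B) = pathPos A + pathPos B := by
  simp [pathPos, List.count_append, Prod.ext_iff]
  constructor <;> ring

lemma steps_sum (L : List Step) :
    L.count Step.n + L.count Step.e + L.count Step.d = L.length := by
  induction L with
  | nil => simp
  | cons h t ih => cases h <;> simp [List.count_cons, ← ih] <;> ring

lemma count_take_le (L : List Step) (k : ℕ) (s : Step) :
    (L.take k).count s ≤ L.count s :=
  (L.take_sublist k).count_le s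

lemma pathPos_take_fst_le (L : List Step) (k : ℕ) :
    (pathPos (L.take k)).1 ≤ (pathPos L).1 :=
  Nat.add_le_add (count_take_le L k _) (count_take_le L k _)

lemma pathPos_take_snd_le (L : List Step) (k : ℕ) :
    (pathPos (L.take k)).2 ≤ (pathPos L).2 :=
  Nat.add_le_add (count_take_le L k _) (count_take_le L k _)

/-- if a proper prefix has the same pathPos as the whole, contradiction on length -/
lemma pathPos_take_ne (L : List Step) (k : ℕ) (hk : k < L.length) :
    pathPos (L.take k) ≠ pathPos L := by
  intro h
  have h1 : (L.take k).count Step.e + (L.take k).count Step.d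
      = L.count Step.e + L.count Step.d := congrArg Prod.fst h
  have h2 : (L.take k).count Step.n + (L.take k).count Step.d
      = L.count Step.n + L.count Step.d := congrArg Prod.snd h
  have he := count_take_le L k Step.e
  have hn := count_take_le L k Step.n
  have hd := count_take_le L k Step.d
  have hs1 := steps_sum (L.take k)
  have hs2 := steps_sum L
  have hlen : (L.take k).length = min k L.length := List.length_take
  omega

lemma take_min (L : List Step) (k : ℕ) : L.take (min k L.length) = L.take k := by
  rcases le_total k L.length with h | h
  · rw [min_eq_left h]
  · rw [min_eq_right h, List.take_length, List.take_of_length_le h]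

lemma hasDiag_append3 (S M T : List Step) (p1 p2 : ℕ) :
    HasDiag (S ++ M ++ T) p1 p2 ↔
      HasDiag S p1 p2 ∨
      (∃ k, M[k]? = some Step.d ∧ pathPos S + pathPos (M.take k) = (p1 - 1, p2 - 1)) ∨
      (∃ k, T[k]? = some Step.d ∧
        pathPos S + pathPos M + pathPos (T.take k) = (p1 - 1, p2 - 1)) := by
  constructor
  · rintro ⟨k, hk, hp⟩
    rcases lt_or_ge k S.length with h | h
    · left
      refine ⟨k, ?_, ?_⟩
      · rw [List.append_assoc, List.getElem?_append, if_pos h] at hk; exact hk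
      · rw [List.append_assoc, List.take_append_of_le_length h.le] at hp; exact hp
    · rcases lt_or_ge k (S.length + M.length) with h2 | h2
      · right; left
        refine ⟨k - S.length, ?_, ?_⟩
        · rw [List.append_assoc, List.getElem?_append_right h, List.getElem?_append,
            if_pos (by omega)] at hk
          exact hk
        · have hk2 : k = S.length + (k - S.length) := by omega
          rw [List.append_assoc, hk2, List.take_length_add_append,
            List.take_append_of_le_length (by omega), pathPos_append] at hp
          exact hp
      · right; right
        refine ⟨k - (S.length + M.length), ?_, ?_⟩
        · rw [List.getElem?_append_right (by simp; omega)] at hk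
          simpa using hk
        · have hk2 : k = (S ++ M).length + (k - (S.length + M.length)) := by simp; omega
          rw [hk2, List.take_length_add_append, pathPos_append, pathPos_append] at hp
          exact hp
  · rintro (⟨k, hk, hp⟩ | ⟨k, hk, hp⟩ | ⟨k, hk, hp⟩)
    · obtain ⟨hlt, -⟩ := List.getElem?_eq_some_iff.mp hk
      refine ⟨k, ?_, ?_⟩
      · rw [List.append_assoc, List.getElem?_append, if_pos hlt]; exact hk
      · rw [List.append_assoc, List.take_append_of_le_length hlt.le]; exact hp
    · obtain ⟨hlt, -⟩ := List.getElem?_eq_some_iff.mp hk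
      refine ⟨S.length + k, ?_, ?_⟩
      · rw [List.append_assoc, List.getElem?_append_right (by omega)]
        simpa [List.getElem?_append, hlt] using hk
      · rw [List.append_assoc, List.take_length_add_append,
          List.take_append_of_le_length hlt.le, pathPos_append]
        exact hp
    · refine ⟨(S ++ M).length + k, ?_, ?_⟩
      · rw [List.getElem?_append_right (by omega)]
        simpa using hk
      · rw [List.take_length_add_append, pathPos_append, pathPos_append]
        exact hp

lemma underPath_append3 (S M T : List Step) (p1 p2 : ℕ) :
    UnderPath (S ++ M ++ T) p1 p2 ↔
      UnderPath S p1 p2 ∨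
      (∃ k, (pathPos S + pathPos (M.take k)).1 = p1 - 1 ∧
        p2 ≤ (pathPos S + pathPos (M.take k)).2) ∨
      (∃ k, (pathPos S + pathPos M + pathPos (T.take k)).1 = p1 - 1 ∧
        p2 ≤ (pathPos S + pathPos M + pathPos (T.take k)).2) := by
  constructor
  · rintro ⟨k, hk, hp⟩
    rcases le_or_gt k S.length with h | h
    · left
      refine ⟨k, ?_, ?_⟩ <;>
        rwa [List.append_assoc, List.take_append_of_le_length h] at *
    · rcases le_or_gt k (S.length + M.length) with h2 | h2
      · right; left
        have hk2 : k = S.length + (k - S.length) := by omega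
        rw [List.append_assoc, hk2, List.take_length_add_append,
          List.take_append_of_le_length (by omega), pathPos_append] at hk hp
        exact ⟨k - S.length, hk, hp⟩
      · right; right
        have hk2 : k = (S ++ M).length + (k - (S.length + M.length)) := by simp; omega
        rw [hk2, List.take_length_add_append, pathPos_append, pathPos_append] at hk hp
        exact ⟨k - (S.length + M.length), hk, hp⟩
  · rintro (⟨k, hk, hp⟩ | ⟨k, hk, hp⟩ | ⟨k, hk, hp⟩)
    · refine ⟨min k S.length, ?_, ?_⟩ <;>
        rw [List.append_assoc, List.take_append_of_le_length (min_le_right _ _), take_min] <;>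
        assumption
    · refine ⟨S.length + min k M.length, ?_, ?_⟩ <;>
        rw [List.append_assoc, List.take_length_add_append,
          List.take_append_of_le_length (min_le_right _ _), pathPos_append, take_min] <;>
        assumption
    · refine ⟨(S ++ M).length + k, ?_, ?_⟩ <;>
        rw [List.take_length_add_append, pathPos_append, pathPos_append] <;> assumption

lemma pathPos_ne : pathPos [Step.n, Step.e] = (1, 1) := rfl
lemma pathPos_d : pathPos [Step.d] = (1, 1) := rfl
lemma pathPos_en : pathPos [Step.e, Step.n] = (1, 1) := rfl
lemma pathPos_nil : pathPos ([] : List Step) = 0 := rfl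

lemma hasDiag_ne_iff (S T : List Step) (p1 p2 : ℕ) :
    HasDiag (S ++ [Step.n, Step.e] ++ T) p1 p2 ↔
      HasDiag S p1 p2 ∨
      (∃ k, T[k]? = some Step.d ∧
        pathPos S + (1, 1) + pathPos (T.take k) = (p1 - 1, p2 - 1)) := by
  rw [hasDiag_append3, pathPos_ne]
  constructor
  · rintro (h | ⟨k, hk, -⟩ | h)
    · exact Or.inl h
    · rcases k with _ | _ | k <;> simp at hk
    · exact Or.inr h
  · rintro (h | h)
    · exact Or.inl h
    · exact Or.inr (Or.inr h)

lemma hasDiag_en_iff (S T : List Step) (p1 p2 : ℕ) :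
    HasDiag (S ++ [Step.e, Step.n] ++ T) p1 p2 ↔
      HasDiag S p1 p2 ∨
      (∃ k, T[k]? = some Step.d ∧
        pathPos S + (1, 1) + pathPos (T.take k) = (p1 - 1, p2 - 1)) := by
  rw [hasDiag_append3, pathPos_en]
  constructor
  · rintro (h | ⟨k, hk, -⟩ | h)
    · exact Or.inl h
    · rcases k with _ | _ | k <;> simp at hk
    · exact Or.inr h
  · rintro (h | h)
    · exact Or.inl h
    · exact Or.inr (Or.inr h)

lemma hasDiag_d_iff (S T : List Step) (p1 p2 : ℕ) :
    HasDiag (S ++ [Step.d] ++ T) p1 p2 ↔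
      HasDiag S p1 p2 ∨ pathPos S = (p1 - 1, p2 - 1) ∨
      (∃ k, T[k]? = some Step.d ∧
        pathPos S + (1, 1) + pathPos (T.take k) = (p1 - 1, p2 - 1)) := by
  rw [hasDiag_append3, pathPos_d]
  refine or_congr_right (or_congr_left ?_)
  constructor
  · rintro ⟨k, hk, hp⟩
    rcases k with _ | k
    · simpa [pathPos_nil] using hp
    · simp at hk
  · intro h
    exact ⟨0, rfl, by simpa [pathPos_nil] using h⟩

lemma underPath_ne_iff (S T : List Step) (p1 p2 : ℕ) :
    UnderPath (S ++ [Step.n, Step.e] ++ T) p1 p2 ↔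
      UnderPath S p1 p2 ∨
      (∃ k, (pathPos S + (1, 1) + pathPos (T.take k)).1 = p1 - 1 ∧
        p2 ≤ (pathPos S + (1, 1) + pathPos (T.take k)).2) ∨
      ((pathPos S).1 = p1 - 1 ∧ p2 = (pathPos S).2 + 1) := by
  rw [underPath_append3, pathPos_ne]
  constructor
  · rintro (h | ⟨k, hk, hp⟩ | h)
    · exact Or.inl h
    · rcases k with _ | _ | k
      · simp only [List.take_zero, pathPos_nil, add_zero] at hk hp
        exact Or.inl ⟨S.length, by rwa [List.take_length], by rwa [List.take_length]⟩
      · have hpp : pathPos (List.take 1 [Step.n, Step.e]) = (0, 1) := rfl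
        rw [hpp] at hk hp
        simp only [Prod.fst_add, Prod.snd_add] at hk hp
        rcases Nat.lt_or_ge p2 ((pathPos S).2 + 1) with h' | h'
        · exact Or.inl ⟨S.length, by rw [List.take_length]; omega,
            by rw [List.take_length]; omega⟩
        · exact Or.inr (Or.inr ⟨by omega, by omega⟩)
      · have hpp : pathPos (List.take (k + 2) [Step.n, Step.e]) = (1, 1) := by
          rw [List.take_of_length_le (by simp)]; rfl
        rw [hpp] at hk hp
        refine Or.inr (Or.inl ⟨0, ?_, ?_⟩) <;>
          simpa [pathPos_nil] using ‹_›
    · exact Or.inr (Or.inl h)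
  · rintro (h | h | ⟨hk, hp⟩)
    · exact Or.inl h
    · exact Or.inr (Or.inr h)
    · refine Or.inr (Or.inl ⟨1, ?_, ?_⟩) <;>
      · have hpp : pathPos (List.take 1 [Step.n, Step.e]) = (0, 1) := rfl
        rw [hpp]
        simp only [Prod.fst_add, Prod.snd_add]
        omega

lemma underPath_d_iff (S T : List Step) (p1 p2 : ℕ) :
    UnderPath (S ++ [Step.d] ++ T) p1 p2 ↔
      UnderPath S p1 p2 ∨
      (∃ k, (pathPos S + (1, 1) + pathPos (T.take k)).1 = p1 - 1 ∧
        p2 ≤ (pathPos S + (1, 1) + pathPos (T.take k)).2) := by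
  rw [underPath_append3, pathPos_d]
  constructor
  · rintro (h | ⟨k, hk, hp⟩ | h)
    · exact Or.inl h
    · rcases k with _ | k
      · simp only [List.take_zero, pathPos_nil, add_zero] at hk hp
        exact Or.inl ⟨S.length, by rwa [List.take_length], by rwa [List.take_length]⟩
      · have hpp : pathPos (List.take (k + 1) [Step.d]) = (1, 1) := by
          rw [List.take_of_length_le (by simp)]; rfl
        rw [hpp] at hk hp
        refine Or.inr ⟨0, ?_, ?_⟩ <;> simpa [pathPos_nil] using ‹_›
    · exact Or.inr h
  · rintro (h | h)
    · exact Or.inl h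
    · exact Or.inr (Or.inr h)

lemma underPath_en_iff (S T : List Step) (p1 p2 : ℕ) :
    UnderPath (S ++ [Step.e, Step.n] ++ T) p1 p2 ↔
      UnderPath S p1 p2 ∨
      (∃ k, (pathPos S + (1, 1) + pathPos (T.take k)).1 = p1 - 1 ∧
        p2 ≤ (pathPos S + (1, 1) + pathPos (T.take k)).2) := by
  rw [underPath_append3, pathPos_en]
  constructor
  · rintro (h | ⟨k, hk, hp⟩ | h)
    · exact Or.inl h
    · rcases k with _ | _ | k
      · simp only [List.take_zero, pathPos_nil, add_zero] at hk hp
        exact Or.inl ⟨S.length, by rwa [List.take_length], by rwa [List.take_length]⟩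
      · have hpp : pathPos (List.take 1 [Step.e, Step.n]) = (1, 0) := rfl
        rw [hpp] at hk hp
        refine Or.inr ⟨0, ?_, ?_⟩ <;>
        · rw [List.take_zero, pathPos_nil, add_zero]
          simp only [Prod.fst_add, Prod.snd_add] at hk hp ⊢
          omega
      · have hpp : pathPos (List.take (k + 2) [Step.e, Step.n]) = (1, 1) := by
          rw [List.take_of_length_le (by simp)]; rfl
        rw [hpp] at hk hp
        refine Or.inr ⟨0, ?_, ?_⟩ <;> simpa [pathPos_nil] using ‹_›
    · exact Or.inr h
  · rintro (h | h)
    · exact Or.inl h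
    · exact Or.inr (Or.inr h)

lemma weight_rel (m : ℕ) (S T : List Step)
    (hab : (pathPos S).1 < (pathPos S).2) (hbm : (pathPos S).2 + 1 ≤ m) (f : ℕ → ℕ+) :
    schroderWeight m (S ++ [Step.n, Step.e] ++ T) f =
      (Polynomial.X - 1) * schroderWeight m (S ++ [Step.d] ++ T) f +
        schroderWeight m (S ++ [Step.e, Step.n] ++ T) f := by
  set a := (pathPos S).1 with ha
  set b := (pathPos S).2 with hb
  have hS : pathPos S = (a, b) := rfl
  have hbox : ((a + 1, b + 1) : ℕ × ℕ) ∈ Finset.Icc 1 m ×ˢ Finset.Icc 1 m := by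
    simp only [Finset.mem_product, Finset.mem_Icc]
    omega
  -- the special box facts
  have hnDS : ¬ HasDiag S (a + 1) (b + 1) := by
    rintro ⟨k, hk, hp⟩
    obtain ⟨hlt, -⟩ := List.getElem?_eq_some_iff.mp hk
    refine pathPos_take_ne S k hlt ?_
    rw [hp, hS]
    simp
  have hnDT : ¬ (∃ k, T[k]? = some Step.d ∧
      pathPos S + (1, 1) + pathPos (T.take k) = (a + 1 - 1, b + 1 - 1)) := by
    rintro ⟨k, -, hp⟩
    have := congrArg Prod.fst hp
    simp only [Prod.fst_add, hS] at this
    omega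
  have hnUS : ¬ UnderPath S (a + 1) (b + 1) := by
    rintro ⟨k, hk, hp⟩
    have := pathPos_take_snd_le S k
    omega
  have hnUT : ¬ (∃ k, (pathPos S + (1, 1) + pathPos (T.take k)).1 = a + 1 - 1 ∧
      b + 1 ≤ (pathPos S + (1, 1) + pathPos (T.take k)).2) := by
    rintro ⟨k, hk, -⟩
    simp only [Prod.fst_add, hS] at hk
    omega
  have hD1 : ¬ HasDiag (S ++ [Step.n, Step.e] ++ T) (a + 1) (b + 1) := by
    rw [hasDiag_ne_iff]; rintro (h | h); exacts [hnDS h, hnDT h]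
  have hD3 : ¬ HasDiag (S ++ [Step.e, Step.n] ++ T) (a + 1) (b + 1) := by
    rw [hasDiag_en_iff]; rintro (h | h); exacts [hnDS h, hnDT h]
  have hD2 : HasDiag (S ++ [Step.d] ++ T) (a + 1) (b + 1) := by
    rw [hasDiag_d_iff]
    exact Or.inr (Or.inl (by rw [hS]; simp))
  have hU1 : (a + 1 < b + 1 ∧ UnderPath (S ++ [Step.n, Step.e] ++ T) (a + 1) (b + 1)) := by
    refine ⟨by omega, ?_⟩
    rw [underPath_ne_iff]
    exact Or.inr (Or.inr ⟨by simp; exact ha.symm, rfl⟩)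
  have hU2 : ¬ (a + 1 < b + 1 ∧ UnderPath (S ++ [Step.d] ++ T) (a + 1) (b + 1)) := by
    rintro ⟨-, h⟩
    rw [underPath_d_iff] at h
    rcases h with h | h; exacts [hnUS h, hnUT h]
  have hU3 : ¬ (a + 1 < b + 1 ∧ UnderPath (S ++ [Step.e, Step.n] ++ T) (a + 1) (b + 1)) := by
    rintro ⟨-, h⟩
    rw [underPath_en_iff] at h
    rcases h with h | h; exacts [hnUS h, hnUT h]
  -- generic boxes agree
  have key : ∀ p ∈ (Finset.Icc 1 m ×ˢ Finset.Icc 1 m).erase (a + 1, b + 1),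
      ((if HasDiag (S ++ [Step.n, Step.e] ++ T) p.1 p.2 then
          (if f p.2 < f p.1 then (1 : Polynomial ℤ) else 0) else 1) *
        (if p.1 < p.2 ∧ UnderPath (S ++ [Step.n, Step.e] ++ T) p.1 p.2 then
          (if f p.2 < f p.1 then Polynomial.X else 1) else 1))
      = ((if HasDiag (S ++ [Step.d] ++ T) p.1 p.2 then
          (if f p.2 < f p.1 then (1 : Polynomial ℤ) else 0) else 1) *
        (if p.1 < p.2 ∧ UnderPath (S ++ [Step.d] ++ T) p.1 p.2 then
          (if f p.2 < f p.1 then Polynomial.X else 1) else 1)) ∧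
      ((if HasDiag (S ++ [Step.n, Step.e] ++ T) p.1 p.2 then
          (if f p.2 < f p.1 then (1 : Polynomial ℤ) else 0) else 1) *
        (if p.1 < p.2 ∧ UnderPath (S ++ [Step.n, Step.e] ++ T) p.1 p.2 then
          (if f p.2 < f p.1 then Polynomial.X else 1) else 1))
      = ((if HasDiag (S ++ [Step.e, Step.n] ++ T) p.1 p.2 then
          (if f p.2 < f p.1 then (1 : Polynomial ℤ) else 0) else 1) *
        (if p.1 < p.2 ∧ UnderPath (S ++ [Step.e, Step.n] ++ T) p.1 p.2 then
          (if f p.2 < f p.1 then Polynomial.X else 1) else 1)) := by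
    rintro ⟨p1, p2⟩ hp
    have hne := Finset.ne_of_mem_erase hp
    have hmem := Finset.mem_of_mem_erase hp
    simp only [Finset.mem_product, Finset.mem_Icc] at hmem
    have hne' : ¬ (p1 = a + 1 ∧ p2 = b + 1) := by
      rintro ⟨h1, h2⟩; exact hne (by rw [h1, h2])
    have hsp1 : ¬ (pathPos S = (p1 - 1, p2 - 1)) := by
      rw [hS, Prod.mk.injEq]
      rintro ⟨h1, h2⟩; exact hne' ⟨by omega, by omega⟩
    have hsp2 : ¬ ((pathPos S).1 = p1 - 1 ∧ p2 = (pathPos S).2 + 1) := by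
      rintro ⟨h1, h2⟩; exact hne' ⟨by omega, by omega⟩
    have hDeq : HasDiag (S ++ [Step.n, Step.e] ++ T) p1 p2 ↔
        HasDiag (S ++ [Step.d] ++ T) p1 p2 := by
      rw [hasDiag_ne_iff, hasDiag_d_iff]
      constructor
      · rintro (h | h); exacts [Or.inl h, Or.inr (Or.inr h)]
      · rintro (h | h | h); exacts [Or.inl h, (hsp1 h).elim, Or.inr h]
    have hDeq' : HasDiag (S ++ [Step.n, Step.e] ++ T) p1 p2 ↔
        HasDiag (S ++ [Step.e, Step.n] ++ T) p1 p2 := by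
      rw [hasDiag_ne_iff, hasDiag_en_iff]
    have hUeq : UnderPath (S ++ [Step.n, Step.e] ++ T) p1 p2 ↔
        UnderPath (S ++ [Step.d] ++ T) p1 p2 := by
      rw [underPath_ne_iff, underPath_d_iff]
      constructor
      · rintro (h | h | h); exacts [Or.inl h, Or.inr h, (hsp2 h).elim]
      · rintro (h | h); exacts [Or.inl h, Or.inr (Or.inl h)]
    have hUeq' : UnderPath (S ++ [Step.n, Step.e] ++ T) p1 p2 ↔
        UnderPath (S ++ [Step.e, Step.n] ++ T) p1 p2 := by
      rw [underPath_ne_iff, underPath_en_iff]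
      constructor
      · rintro (h | h | h); exacts [Or.inl h, Or.inr h, (hsp2 h).elim]
      · rintro (h | h); exacts [Or.inl h, Or.inr (Or.inl h)]
    constructor
    · rw [if_congr hDeq rfl rfl, if_congr (and_congr_right fun _ => hUeq) rfl rfl]
    · rw [if_congr hDeq' rfl rfl, if_congr (and_congr_right fun _ => hUeq') rfl rfl]
  have e1 := (Finset.mul_prod_erase (Finset.Icc 1 m ×ˢ Finset.Icc 1 m)
    (fun p : ℕ × ℕ =>
      ((if HasDiag (S ++ [Step.n, Step.e] ++ T) p.1 p.2 then
          (if f p.2 < f p.1 then (1 : Polynomial ℤ) else 0) else 1) *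
        (if p.1 < p.2 ∧ UnderPath (S ++ [Step.n, Step.e] ++ T) p.1 p.2 then
          (if f p.2 < f p.1 then Polynomial.X else 1) else 1))) hbox).symm
  have e2 := (Finset.mul_prod_erase (Finset.Icc 1 m ×ˢ Finset.Icc 1 m)
    (fun p : ℕ × ℕ =>
      ((if HasDiag (S ++ [Step.d] ++ T) p.1 p.2 then
          (if f p.2 < f p.1 then (1 : Polynomial ℤ) else 0) else 1) *
        (if p.1 < p.2 ∧ UnderPath (S ++ [Step.d] ++ T) p.1 p.2 then
          (if f p.2 < f p.1 then Polynomial.X else 1) else 1))) hbox).symm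
  have e3 := (Finset.mul_prod_erase (Finset.Icc 1 m ×ˢ Finset.Icc 1 m)
    (fun p : ℕ × ℕ =>
      ((if HasDiag (S ++ [Step.e, Step.n] ++ T) p.1 p.2 then
          (if f p.2 < f p.1 then (1 : Polynomial ℤ) else 0) else 1) *
        (if p.1 < p.2 ∧ UnderPath (S ++ [Step.e, Step.n] ++ T) p.1 p.2 then
          (if f p.2 < f p.1 then Polynomial.X else 1) else 1))) hbox).symm
  have hprod12 := Finset.prod_congr rfl (fun p hp => (key p hp).1)
  have hprod13 := Finset.prod_congr rfl (fun p hp => (key p hp).2)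
  rw [schroderWeight, schroderWeight, schroderWeight, e1, e2, e3, hprod12,
    hprod13.symm.trans hprod12]
  dsimp only
  rw [if_neg hD1, if_pos hU1, if_pos hD2, if_neg hU2, if_neg hD3, if_neg hU3]
  by_cases hc : f (b + 1) < f (a + 1)
  · rw [if_pos hc, if_pos hc]; ring
  · rw [if_neg hc, if_neg hc]; ring

lemma cond_finite (m : ℕ) (dd : ℕ+ →₀ ℕ) :
    {f : ℕ → ℕ+ | (∀ v : ℕ, v ∉ Finset.Icc 1 m → f v = 1) ∧
      (∑ v ∈ Finset.Icc 1 m, Finsupp.single (f v) 1) = dd}.Finite := by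
  refine Set.Finite.subset (Set.finite_range
    (fun g : (Finset.Icc 1 m : Finset ℕ) → (insert 1 dd.support : Finset ℕ+) =>
      fun v : ℕ => if h : v ∈ Finset.Icc 1 m then (g ⟨v, h⟩ : ℕ+) else 1)) ?_
  rintro f ⟨hout, hsum⟩
  refine ⟨fun v => ⟨f v, ?_⟩, ?_⟩
  · rw [Finset.mem_insert]
    right
    rw [Finsupp.mem_support_iff]
    have h1 : (1 : ℕ) ≤ (∑ v' ∈ Finset.Icc 1 m, Finsupp.single (f v') 1) (f ↑v) := by
      rw [Finsupp.finset_sum_apply]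
      have := Finset.single_le_sum
        (f := fun v' => (Finsupp.single (f v') (1 : ℕ)) (f ↑v))
        (fun i _ => Nat.zero_le _) v.2
      simpa [Finsupp.single_eq_same] using this
    rw [hsum] at h1
    omega
  · funext v
    by_cases h : v ∈ Finset.Icc 1 m
    · simp [h]
    · simp [h, hout v h]

lemma finsum_rel {α : Type} (C : α → Prop) [∀ x, Decidable (C x)]
    (w1 w2 w3 : α → Polynomial ℤ) (c : Polynomial ℤ)
    (hfin : {x | C x}.Finite) (hw : ∀ x, C x → w1 x = c * w2 x + w3 x) :
    ∑ᶠ x, (if C x then w1 x else 0) =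
      c * ∑ᶠ x, (if C x then w2 x else 0) + ∑ᶠ x, (if C x then w3 x else 0) := by
  have hsupp : ∀ w : α → Polynomial ℤ,
      (Function.support fun x => if C x then w x else 0) ⊆ {x | C x} := by
    intro w x hx
    by_contra h
    rw [Set.mem_setOf_eq] at h
    exact hx (if_neg h)
  have h2 : (Function.support fun x => c * (if C x then w2 x else 0)) ⊆ {x | C x} := by
    intro x hx
    by_contra h
    rw [Set.mem_setOf_eq] at h
    exact hx (by simp only []; rw [if_neg h, mul_zero])
  rw [mul_finsum _ _,
    ← finsum_add_distrib (hfin.subset h2) (hfin.subset (hsupp w3))]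
  refine finsum_congr fun x => ?_
  by_cases h : C x <;> simp [h, hw x]

/-- Relation (A) of Alexandersson–Sulzgruber: if `SneT`, `SdT` and `SenT` are
Schröder paths of length `m`, then
`LLT(SneT) = (q-1)·LLT(SdT) + LLT(SenT)`. -/
theorem schroder_relation_A (m : ℕ) (S T : List Step)
    (h1 : IsSchroder m (S ++ [Step.n, Step.e] ++ T))
    (h2 : IsSchroder m (S ++ [Step.d] ++ T))
    (h3 : IsSchroder m (S ++ [Step.e, Step.n] ++ T)) :
    LLTpath m (S ++ [Step.n, Step.e] ++ T) =
      MvPowerSeries.C (σ := ℕ+) (R := Polynomial ℤ) (Polynomial.X - 1) *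
          LLTpath m (S ++ [Step.d] ++ T) +
        LLTpath m (S ++ [Step.e, Step.n] ++ T) := by
  have hab : (pathPos S).1 < (pathPos S).2 := by
    have hd : (S ++ [Step.d] ++ T)[S.length]? = some Step.d := by
      rw [List.append_assoc, List.getElem?_append_right le_rfl]
      simp
    have h := h2.2.2 S.length hd
    rwa [List.append_assoc, List.take_append_of_le_length le_rfl, List.take_length] at h
  have hbm : (pathPos S).2 + 1 ≤ m := by
    have h := congrArg Prod.snd h1.1
    rw [List.append_assoc, pathPos_append, pathPos_append] at h
    simp only [Prod.snd_add, pathPos_ne] at h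
    omega
  refine MvPowerSeries.ext fun dd => ?_
  rw [map_add, MvPowerSeries.coeff_C_mul]
  show LLTpath m (S ++ [Step.n, Step.e] ++ T) dd =
    (Polynomial.X - 1) * LLTpath m (S ++ [Step.d] ++ T) dd +
      LLTpath m (S ++ [Step.e, Step.n] ++ T) dd
  simp only [LLTpath]
  exact finsum_rel _ _ _ _ _ (cond_finite m dd) (fun f _ => weight_rel m S T hab hbm f)
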